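/- Let {Λ_i} be a g-frame for H with g-frame operator S_Λ = Σ_i Λ_i* Λ_i, and let T, U ∈ GL⁺(H) be operators that commute with each other and with S_Λ. Then {Λ_i} is a (T,U)-controlled g-frame for H. -/

import Mathlib

open scoped RealInnerProductSpace

section auxlem
variable {H : Type*} [NormedAddCommGroup H] [InnerProductSpace ℝ H] [CompleteSpace H]

private lemma sa_swap {X : H →L[ℝ] H} (h : IsSelfAdjoint X) (f g : H) :
    ⟪X f, g⟫ = ⟪f, X g⟫ := h.isSymmetric f g

/-- product of commuting positive (selfadjoint) operators is positive -/
private lemma mul_inner_nonneg {S W : H →L[ℝ] H}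
    (hSpos : ∀ f, 0 ≤ ⟪S f, f⟫)
    (hWsa : IsSelfAdjoint W) (hWpos : ∀ f, 0 ≤ ⟪W f, f⟫)
    (hc : Commute S W) (f : H) : 0 ≤ ⟪S (W f), f⟫ := by
  set c : ℝ := (‖W‖ + 1)⁻¹ with hcdef
  have hcpos : 0 < c := by positivity
  set W' : H →L[ℝ] H := c • W with hW'def
  have hW'sa : IsSelfAdjoint W' := by
    simpa [hW'def, IsSelfAdjoint] using congrArg (c • ·) hWsa.star_eq
  have hW'pos : ∀ g, 0 ≤ ⟪W' g, g⟫ := by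
    intro g
    have : W' g = c • W g := rfl
    rw [this, real_inner_smul_left]
    exact mul_nonneg hcpos.le (hWpos g)
  have hW'le : ∀ g, ⟪W' g, g⟫ ≤ ⟪g, g⟫ := by
    intro g
    have h1 : ⟪W g, g⟫ ≤ ‖W‖ * (‖g‖ * ‖g‖) := by
      calc ⟪W g, g⟫ ≤ ‖W g‖ * ‖g‖ := real_inner_le_norm _ _
        _ ≤ ‖W‖ * ‖g‖ * ‖g‖ := by
            exact mul_le_mul_of_nonneg_right (W.le_opNorm g) (norm_nonneg g)
        _ = ‖W‖ * (‖g‖ * ‖g‖) := by ring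
    have h2 : W' g = c • W g := rfl
    rw [h2, real_inner_smul_left, real_inner_self_eq_norm_mul_norm]
    calc c * ⟪W g, g⟫ ≤ c * (‖W‖ * (‖g‖ * ‖g‖)) := by
          exact mul_le_mul_of_nonneg_left h1 hcpos.le
      _ = (c * ‖W‖) * (‖g‖ * ‖g‖) := by ring
      _ ≤ 1 * (‖g‖ * ‖g‖) := by
          apply mul_le_mul_of_nonneg_right _ (by positivity)
          rw [hcdef]
          rw [inv_mul_le_iff₀ (by positivity)]
          linarith [norm_nonneg W]
      _ = ‖g‖ * ‖g‖ := one_mul _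
  have hcpt : ∀ x, S (W x) = W (S x) := by
    intro x
    have := congrArg (fun (T : H →L[ℝ] H) => T x) hc.eq
    simpa [ContinuousLinearMap.mul_apply] using this
  have hcW' : Commute S W' := by
    show S * W' = W' * S
    ext x
    simp [ContinuousLinearMap.mul_apply, hW'def, map_smul, hcpt x]
  -- the iterated sequence
  set a : ℕ → (H →L[ℝ] H) := fun n => (fun X => X - X * X)^[n] W' with hadef
  have ha0 : a 0 = W' := rfl
  have hasucc : ∀ n, a (n + 1) = a n - a n * a n := by
    intro n
    simp only [hadef, Function.iterate_succ_apply']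
  -- invariants
  have inv : ∀ n, IsSelfAdjoint (a n) ∧ (∀ g, 0 ≤ ⟪a n g, g⟫) ∧ (∀ g, ⟪a n g, g⟫ ≤ ⟪g, g⟫) := by
    intro n
    induction n with
    | zero => exact ⟨hW'sa, hW'pos, hW'le⟩
    | succ n ih =>
      obtain ⟨hsa, hpos, hle⟩ := ih
      set X := a n
      have happ : ∀ g, a (n + 1) g = X g - X (X g) := by
        intro g; rw [hasucc n]; rfl
      refine ⟨?_, ?_, ?_⟩
      · rw [hasucc n]
        have : IsSelfAdjoint (X * X) := by
          rw [IsSelfAdjoint, star_mul, hsa.star_eq]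
        exact hsa.sub this
      · intro g
        have key : ⟪a (n+1) g, g⟫ = ⟪X g - X (X g), X g⟫ + ⟪X (g - X g), g - X g⟫ := by
          rw [happ g]
          simp only [map_sub, inner_sub_left, inner_sub_right]
          ring
        rw [key]
        have t1 : 0 ≤ ⟪X g - X (X g), X g⟫ := by
          have := hle (X g)
          have h' : ⟪X g - X (X g), X g⟫ = ⟪X g, X g⟫ - ⟪X (X g), X g⟫ := by
            rw [inner_sub_left]
          linarith
        have t2 : 0 ≤ ⟪X (g - X g), g - X g⟫ := hpos _
        linarith
      · intro g
        have h' : ⟪a (n+1) g, g⟫ = ⟪X g, g⟫ - ⟪X (X g), g⟫ := by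
          rw [happ g, inner_sub_left]
        have h2 : ⟪X (X g), g⟫ = ⟪X g, X g⟫ := sa_swap hsa (X g) g
        have h3 : (0:ℝ) ≤ ⟪X g, X g⟫ := real_inner_self_nonneg
        rw [h', h2]
        linarith [hle g]
  -- commute with iterates
  have hcomm : ∀ n, Commute S (a n) := by
    intro n
    induction n with
    | zero => exact hcW'
    | succ n ih => rw [hasucc n]; exact ih.sub_right (ih.mul_right ih)
  have happt : ∀ n x, S ((a n) x) = (a n) (S x) := by
    intro n x
    have := congrArg (fun (T : H →L[ℝ] H) => T x) (hcomm n).eq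
    simpa [ContinuousLinearMap.mul_apply] using this
  -- telescoping
  have tele : ∀ (R : H →L[ℝ] H), (∀ n x, R ((a n) x) = (a n) (R x)) → ∀ n,
      ⟪R (W' f), f⟫ - ⟪R (a n f), f⟫ = ∑ k ∈ Finset.range n, ⟪R (a k f), a k f⟫ := by
    intro R hR n
    induction n with
    | zero => simp [ha0]
    | succ n ih =>
      rw [Finset.sum_range_succ, ← ih]
      have h1 : a (n+1) f = a n f - (a n) ((a n) f) := by
        rw [hasucc n]; rfl
      have h2 : ⟪R ((a n) ((a n) f)), f⟫ = ⟪R (a n f), a n f⟫ := by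
        rw [hR n (a n f), sa_swap (inv n).1]
      rw [h1, map_sub, inner_sub_left]
      linarith [h2]
  have sumbound : ∀ n, ∑ k ∈ Finset.range n, ‖a k f‖^2 ≤ ⟪W' f, f⟫ := by
    intro n
    have h := tele 1 (by intro n x; simp) n
    simp only [ContinuousLinearMap.one_apply] at h
    calc ∑ k ∈ Finset.range n, ‖a k f‖^2
        = ∑ k ∈ Finset.range n, ⟪a k f, a k f⟫ :=
          Finset.sum_congr rfl fun k _ => (real_inner_self_eq_norm_sq _).symm
      _ = ⟪W' f, f⟫ - ⟪a n f, f⟫ := h.symm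
      _ ≤ ⟪W' f, f⟫ := by linarith [(inv n).2.1 f]
  have hsummable : Summable (fun n => ‖a n f‖^2) :=
    summable_of_sum_range_le (fun n => sq_nonneg _) sumbound
  have hnormsq : Filter.Tendsto (fun n => ‖a n f‖^2) Filter.atTop (nhds 0) :=
    hsummable.tendsto_atTop_zero
  have hvec : Filter.Tendsto (fun n => a n f) Filter.atTop (nhds 0) := by
    rw [tendsto_zero_iff_norm_tendsto_zero]
    have h1 := (Real.continuous_sqrt.tendsto 0).comp hnormsq
    simp only [Real.sqrt_zero] at h1
    exact Filter.Tendsto.congr (fun n => Real.sqrt_sq (norm_nonneg _)) h1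
  have hinner : Filter.Tendsto (fun n => ⟪S (a n f), f⟫) Filter.atTop (nhds 0) := by
    have h1 : Filter.Tendsto (fun n => S (a n f)) Filter.atTop (nhds 0) := by
      have := (S.continuous.tendsto 0).comp hvec
      simpa [Function.comp_def] using this
    have h2 := Filter.Tendsto.inner (𝕜 := ℝ) h1 (tendsto_const_nhds (x := f))
    simpa using h2
  have main : (0:ℝ) ≤ ⟪S (W' f), f⟫ := by
    have hseq : ∀ n, (0:ℝ) ≤ ⟪S (W' f), f⟫ - ⟪S (a n f), f⟫ := by
      intro n
      rw [tele S happt n]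
      exact Finset.sum_nonneg fun k _ => hSpos _
    have hlim : Filter.Tendsto (fun n => ⟪S (W' f), f⟫ - ⟪S (a n f), f⟫)
        Filter.atTop (nhds (⟪S (W' f), f⟫)) := by
      simpa using (tendsto_const_nhds (x := ⟪S (W' f), f⟫)).sub hinner
    exact ge_of_tendsto' hlim hseq
  have hW'app : S (W' f) = c • S (W f) := by simp [hW'def, map_smul]
  rw [hW'app, real_inner_smul_left] at main
  nlinarith [main, hcpos]

private lemma op_cs {P : H →L[ℝ] H} (hsa : IsSelfAdjoint P) (hpos : ∀ f, 0 ≤ ⟪P f, f⟫)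
    (x : H) : ‖P x‖^2 ≤ (‖P‖ + 1) * ⟪P x, x⟫ := by
  set y := P x with hy
  have cs : ⟪P x, y⟫^2 ≤ ⟪P x, x⟫ * ⟪P y, y⟫ := by
    have hq : ∀ t : ℝ, 0 ≤ ⟪P y, y⟫ * (t * t) + (2 * ⟪P x, y⟫) * t + ⟪P x, x⟫ := by
      intro t
      have h0 := hpos (x + t • y)
      have e1 : P (x + t • y) = P x + t • P y := by simp
      rw [e1] at h0
      have swap : ⟪P y, x⟫ = ⟪P x, y⟫ := by
        rw [sa_swap hsa y x, real_inner_comm]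
      simp only [inner_add_left, inner_add_right, real_inner_smul_left,
        real_inner_smul_right] at h0
      rw [swap] at h0
      linarith [h0]
    have hd := discrim_le_zero hq
    rw [discrim] at hd
    nlinarith [hd]
  have hyy : ⟪P x, y⟫ = ‖y‖^2 := by rw [hy, real_inner_self_eq_norm_sq]
  have h1 : ⟪P y, y⟫ ≤ (‖P‖ + 1) * ‖y‖^2 := by
    calc ⟪P y, y⟫ ≤ ‖P y‖ * ‖y‖ := real_inner_le_norm _ _
      _ ≤ (‖P‖ * ‖y‖) * ‖y‖ := mul_le_mul_of_nonneg_right (P.le_opNorm y) (norm_nonneg _)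
      _ = ‖P‖ * ‖y‖^2 := by ring
      _ ≤ (‖P‖ + 1) * ‖y‖^2 := by nlinarith [sq_nonneg ‖y‖]
  by_cases hy0 : ‖y‖ = 0
  · rw [hy0]
    simp only [ne_eq, OfNat.ofNat_ne_zero, not_false_eq_true, zero_pow]
    exact mul_nonneg (by positivity) (hpos x)
  · have hypos : 0 < ‖y‖ := lt_of_le_of_ne (norm_nonneg _) (Ne.symm hy0)
    have h4 : ‖y‖^2 * ‖y‖^2 ≤ ((‖P‖ + 1) * ⟪P x, x⟫) * ‖y‖^2 := by
      rw [hyy] at cs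
      nlinarith [cs, h1, hpos x, sq_nonneg ‖y‖]
    have := le_of_mul_le_mul_right h4 (by positivity : (0:ℝ) < ‖y‖^2)
    linarith

private lemma frame_summable {ι : Type*} {G : ι → Type*} [∀ i, NormedAddCommGroup (G i)]
    [∀ i, InnerProductSpace ℝ (G i)] [∀ i, CompleteSpace (G i)]
    (Λ : ∀ i, H →L[ℝ] G i) (B : ℝ) (hB : 0 < B)
    (hsum : ∀ f : H, Summable (fun i => ‖Λ i f‖ ^ 2))
    (hub : ∀ f : H, ∑' i, ‖Λ i f‖ ^ 2 ≤ B * ‖f‖ ^ 2) (f : H) :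
    Summable (fun i => (ContinuousLinearMap.adjoint (Λ i)) (Λ i f)) := by
  rw [summable_iff_vanishing]
  intro e he
  obtain ⟨ε, εpos, hε⟩ := Metric.mem_nhds_iff.mp he
  set δ : ℝ := (ε / (Real.sqrt B + 1))^2 with hδ
  have hsB : 0 < Real.sqrt B + 1 := by positivity
  have δpos : 0 < δ := by positivity
  obtain ⟨s, hs⟩ := (hsum f).vanishing (Metric.ball_mem_nhds 0 δpos)
  refine ⟨s, fun t ht => ?_⟩
  have htb : ∑ i ∈ t, ‖Λ i f‖^2 < δ := by
    have h := hs t ht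
    rw [Metric.mem_ball, dist_zero_right, Real.norm_eq_abs] at h
    exact lt_of_le_of_lt (le_abs_self _) h
  have htnn : (0:ℝ) ≤ ∑ i ∈ t, ‖Λ i f‖^2 := Finset.sum_nonneg fun i _ => sq_nonneg _
  set v := ∑ i ∈ t, (ContinuousLinearMap.adjoint (Λ i)) (Λ i f) with hv
  have hest : ‖v‖^2 ≤ Real.sqrt (∑ i ∈ t, ‖Λ i f‖^2) * (Real.sqrt B * ‖v‖) := by
    have e1 : ‖v‖^2 = ∑ i ∈ t, ⟪Λ i f, Λ i v⟫ := by
      rw [← real_inner_self_eq_norm_sq, hv, sum_inner]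
      exact Finset.sum_congr rfl fun i _ => ContinuousLinearMap.adjoint_inner_left _ _ _
    have e2 : ∑ i ∈ t, ⟪Λ i f, Λ i v⟫ ≤ ∑ i ∈ t, ‖Λ i f‖ * ‖Λ i v‖ :=
      Finset.sum_le_sum fun i _ => real_inner_le_norm _ _
    have e3 : ∑ i ∈ t, ‖Λ i f‖ * ‖Λ i v‖ ≤
        Real.sqrt (∑ i ∈ t, ‖Λ i f‖^2) * Real.sqrt (∑ i ∈ t, ‖Λ i v‖^2) :=
      Real.sum_mul_le_sqrt_mul_sqrt t _ _
    have e4 : ∑ i ∈ t, ‖Λ i v‖^2 ≤ B * ‖v‖^2 :=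
      le_trans (Summable.sum_le_tsum t (fun i _ => sq_nonneg _) (hsum v)) (hub v)
    have e5 : Real.sqrt (∑ i ∈ t, ‖Λ i v‖^2) ≤ Real.sqrt B * ‖v‖ := by
      calc Real.sqrt (∑ i ∈ t, ‖Λ i v‖^2) ≤ Real.sqrt (B * ‖v‖^2) := Real.sqrt_le_sqrt e4
        _ = Real.sqrt B * ‖v‖ := by
            rw [Real.sqrt_mul hB.le, Real.sqrt_sq (norm_nonneg v)]
    calc ‖v‖^2 = ∑ i ∈ t, ⟪Λ i f, Λ i v⟫ := e1
      _ ≤ ∑ i ∈ t, ‖Λ i f‖ * ‖Λ i v‖ := e2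
      _ ≤ Real.sqrt (∑ i ∈ t, ‖Λ i f‖^2) * Real.sqrt (∑ i ∈ t, ‖Λ i v‖^2) := e3
      _ ≤ Real.sqrt (∑ i ∈ t, ‖Λ i f‖^2) * (Real.sqrt B * ‖v‖) :=
          mul_le_mul_of_nonneg_left e5 (Real.sqrt_nonneg _)
  have hnv : ‖v‖ ≤ Real.sqrt (∑ i ∈ t, ‖Λ i f‖^2) * Real.sqrt B := by
    by_cases hv0 : ‖v‖ = 0
    · rw [hv0]; positivity
    · have hvpos : 0 < ‖v‖ := lt_of_le_of_ne (norm_nonneg _) (Ne.symm hv0)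
      have : ‖v‖ * ‖v‖ ≤ (Real.sqrt (∑ i ∈ t, ‖Λ i f‖^2) * Real.sqrt B) * ‖v‖ := by
        nlinarith [hest]
      exact le_of_mul_le_mul_right this hvpos
  have hlt : Real.sqrt (∑ i ∈ t, ‖Λ i f‖^2) * Real.sqrt B < ε := by
    have h1 : Real.sqrt (∑ i ∈ t, ‖Λ i f‖^2) ≤ Real.sqrt δ := Real.sqrt_le_sqrt htb.le
    have h2 : Real.sqrt δ = ε / (Real.sqrt B + 1) := by
      rw [hδ, Real.sqrt_sq (by positivity)]
    have h3 : Real.sqrt δ * Real.sqrt B < ε := by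
      rw [h2, div_mul_eq_mul_div, div_lt_iff₀ hsB]
      nlinarith [Real.sqrt_nonneg B, εpos]
    calc Real.sqrt (∑ i ∈ t, ‖Λ i f‖^2) * Real.sqrt B
        ≤ Real.sqrt δ * Real.sqrt B := mul_le_mul_of_nonneg_right h1 (Real.sqrt_nonneg _)
      _ < ε := h3
  apply hε
  rw [Metric.mem_ball, dist_zero_right]
  exact lt_of_le_of_lt hnv hlt

end auxlem


/-- Proposition 2.3(2): if `{Λ_i}` is a g-frame for `H` with g-frame operator
`S_Λ = Σ_i Λ_i* Λ_i`, and `T, U ∈ GL⁺(H)` commute with each other and with `S_Λ`,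
then `{Λ_i}` is a `(T,U)`-controlled g-frame for `H`. -/
theorem stmt2 {H : Type*} [NormedAddCommGroup H] [InnerProductSpace ℝ H] [CompleteSpace H]
    {ι : Type*} {G : ι → Type*} [∀ i, NormedAddCommGroup (G i)]
    [∀ i, InnerProductSpace ℝ (G i)] [∀ i, CompleteSpace (G i)]
    (Λ : ∀ i, H →L[ℝ] G i)
    (A B : ℝ) (hA : 0 < A) (hAB : A ≤ B)
    (hframe : ∀ f : H, Summable (fun i => ‖Λ i f‖ ^ 2) ∧
      A * ‖f‖ ^ 2 ≤ ∑' i, ‖Λ i f‖ ^ 2 ∧ ∑' i, ‖Λ i f‖ ^ 2 ≤ B * ‖f‖ ^ 2)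
    (S : H →L[ℝ] H)
    (hS : ∀ f : H, S f = ∑' i, (ContinuousLinearMap.adjoint (Λ i)) (Λ i f))
    (T U : H →L[ℝ] H)
    (hTsa : IsSelfAdjoint T) (hTpos : ∀ f : H, 0 ≤ ⟪T f, f⟫) (hTinv : IsUnit T)
    (hUsa : IsSelfAdjoint U) (hUpos : ∀ f : H, 0 ≤ ⟪U f, f⟫) (hUinv : IsUnit U)
    (hTU : T.comp U = U.comp T) (hTS : T.comp S = S.comp T) (hUS : U.comp S = S.comp U) :
    ∃ C D : ℝ, 0 < C ∧ C ≤ D ∧ ∀ f : H,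
      Summable (fun i => ⟪Λ i (T f), Λ i (U f)⟫) ∧
      C * ‖f‖ ^ 2 ≤ ∑' i, ⟪Λ i (T f), Λ i (U f)⟫ ∧
      ∑' i, ⟪Λ i (T f), Λ i (U f)⟫ ≤ D * ‖f‖ ^ 2 := by
  classical
  have hB : 0 < B := lt_of_lt_of_le hA hAB
  have hsum : ∀ f : H, Summable (fun i => ‖Λ i f‖ ^ 2) := fun f => (hframe f).1
  have hub : ∀ f : H, ∑' i, ‖Λ i f‖ ^ 2 ≤ B * ‖f‖ ^ 2 := fun f => (hframe f).2.2
  have hvec : ∀ f : H, Summable (fun i => (ContinuousLinearMap.adjoint (Λ i)) (Λ i f)) :=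
    frame_summable Λ B hB hsum hub
  have key : ∀ g h : H, HasSum (fun i => ⟪Λ i g, Λ i h⟫) ⟪S g, h⟫ := by
    intro g h
    have h1 : HasSum (fun i => (ContinuousLinearMap.adjoint (Λ i)) (Λ i g)) (S g) := by
      rw [hS g]; exact (hvec g).hasSum
    have h2 := h1.mapL (innerSL ℝ h)
    have h3 : (fun i => (innerSL ℝ h) ((ContinuousLinearMap.adjoint (Λ i)) (Λ i g)))
        = fun i => ⟪Λ i g, Λ i h⟫ := by
      funext i
      rw [innerSL_apply_apply, real_inner_comm, ContinuousLinearMap.adjoint_inner_left]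
    rw [h3] at h2
    have h4 : (innerSL ℝ h) (S g) = ⟪S g, h⟫ := by rw [innerSL_apply_apply, real_inner_comm]
    rw [h4] at h2
    exact h2
  have keyself : ∀ f : H, HasSum (fun i => ‖Λ i f‖ ^ 2) ⟪S f, f⟫ := by
    intro f
    have h := key f f
    simpa only [real_inner_self_eq_norm_sq] using h
  have hSlow : ∀ f : H, A * ‖f‖ ^ 2 ≤ ⟪S f, f⟫ := by
    intro f
    rw [← (keyself f).tsum_eq]
    exact (hframe f).2.1
  have hSpos : ∀ f : H, 0 ≤ ⟪S f, f⟫ := fun f =>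
    le_trans (by positivity) (hSlow f)
  have hSsa : IsSelfAdjoint S := by
    rw [ContinuousLinearMap.isSelfAdjoint_iff_isSymmetric]
    intro x y
    have h1 := (key x y).tsum_eq
    have h2 := (key y x).tsum_eq
    calc ⟪S x, y⟫ = ∑' i, ⟪Λ i x, Λ i y⟫ := h1.symm
      _ = ∑' i, ⟪Λ i y, Λ i x⟫ := tsum_congr fun i => real_inner_comm _ _
      _ = ⟪S y, x⟫ := h2
      _ = ⟪x, S y⟫ := real_inner_comm _ _
  have hSinv : IsUnit S := by
    apply ContinuousLinearMap.isUnit_of_forall_le_norm_inner_map S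
      (c := ⟨A, hA.le⟩) (by exact_mod_cast hA)
    intro x
    have hl : A * ‖x‖ ^ 2 ≤ ⟪S x, x⟫ := hSlow x
    rw [Real.norm_eq_abs]
    calc ‖x‖ ^ 2 * ((⟨A, hA.le⟩ : NNReal) : ℝ) = A * ‖x‖ ^ 2 := by
          simp [mul_comm]
      _ ≤ ⟪S x, x⟫ := hl
      _ ≤ |⟪S x, x⟫| := le_abs_self _
  -- commutation facts
  have cST : Commute S T := by
    show S * T = T * S
    rw [ContinuousLinearMap.mul_def, ContinuousLinearMap.mul_def]
    exact hTS.symm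
  have cSU : Commute S U := by
    show S * U = U * S
    rw [ContinuousLinearMap.mul_def, ContinuousLinearMap.mul_def]
    exact hUS.symm
  have cTU : Commute T U := by
    show T * U = U * T
    rw [ContinuousLinearMap.mul_def, ContinuousLinearMap.mul_def]
    exact hTU
  -- the operator P
  set P : H →L[ℝ] H := S * (T * U) with hPdef
  have hWsa : IsSelfAdjoint (T * U) := by
    rw [IsSelfAdjoint, star_mul, hTsa.star_eq, hUsa.star_eq]
    exact cTU.symm.eq
  have hWpos : ∀ f : H, 0 ≤ ⟪(T * U) f, f⟫ := by
    intro f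
    have h := mul_inner_nonneg hTpos hUsa hUpos cTU f
    simpa [ContinuousLinearMap.mul_apply] using h
  have cSW : Commute S (T * U) := cST.mul_right cSU
  have hPpos : ∀ f : H, 0 ≤ ⟪P f, f⟫ := by
    intro f
    have h := mul_inner_nonneg hSpos hWsa hWpos cSW f
    simpa [hPdef, ContinuousLinearMap.mul_apply] using h
  have hPsa : IsSelfAdjoint P := by
    rw [hPdef, IsSelfAdjoint, star_mul, hWsa.star_eq, hSsa.star_eq]
    exact cSW.symm.eq
  have hPinv : IsUnit P := hSinv.mul (hTinv.mul hUinv)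
  -- the sum identity
  have hkey : ∀ f : H, HasSum (fun i => ⟪Λ i (T f), Λ i (U f)⟫) ⟪P f, f⟫ := by
    intro f
    have h1 := key (T f) (U f)
    have hop : U * (S * T) = S * (T * U) := by
      rw [← mul_assoc, cSU.symm.eq, mul_assoc, cTU.symm.eq]
    have e : ⟪P f, f⟫ = ⟪S (T f), U f⟫ := by
      rw [hPdef, ← hop]
      have e2 : (U * (S * T)) f = U (S (T f)) := rfl
      rw [e2, sa_swap hUsa, real_inner_comm]
    rw [← e] at h1
    exact h1
  -- the inverse
  obtain ⟨u, hu⟩ := hPinv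
  set Q : H →L[ℝ] H := ((u⁻¹ : (H →L[ℝ] H)ˣ) : H →L[ℝ] H) with hQdef
  have hQ : ∀ f : H, Q (P f) = f := by
    intro f
    have h1 : Q * P = 1 := by rw [hQdef, ← hu]; exact u.inv_mul
    have := congrArg (fun (R : H →L[ℝ] H) => R f) h1
    simpa [ContinuousLinearMap.mul_apply] using this
  -- constants
  set C : ℝ := ((‖P‖ + 1) * (‖Q‖ + 1) ^ 2)⁻¹ with hCdef
  set D : ℝ := max C (‖P‖ + 1) with hDdef
  have hKpos : 0 < (‖P‖ + 1) * (‖Q‖ + 1) ^ 2 := by positivity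
  have hCpos : 0 < C := by rw [hCdef]; positivity
  refine ⟨C, D, hCpos, le_max_left _ _, fun f => ?_⟩
  have hts := (hkey f).tsum_eq
  refine ⟨(hkey f).summable, ?_, ?_⟩
  · -- lower bound
    rw [hts]
    have h1 := op_cs hPsa hPpos f
    have h2 : ‖f‖ ^ 2 ≤ (‖Q‖ + 1) ^ 2 * ‖P f‖ ^ 2 := by
      have h3 : ‖f‖ ≤ (‖Q‖ + 1) * ‖P f‖ := by
        calc ‖f‖ = ‖Q (P f)‖ := by rw [hQ f]
          _ ≤ ‖Q‖ * ‖P f‖ := Q.le_opNorm _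
          _ ≤ (‖Q‖ + 1) * ‖P f‖ :=
              mul_le_mul_of_nonneg_right (by linarith) (norm_nonneg _)
      calc ‖f‖ ^ 2 ≤ ((‖Q‖ + 1) * ‖P f‖) ^ 2 := by
            exact pow_le_pow_left₀ (norm_nonneg f) h3 2
        _ = (‖Q‖ + 1) ^ 2 * ‖P f‖ ^ 2 := by ring
    have hmain : ‖f‖ ^ 2 ≤ ((‖P‖ + 1) * (‖Q‖ + 1) ^ 2) * ⟪P f, f⟫ := by
      nlinarith [mul_le_mul_of_nonneg_left h1 (sq_nonneg (‖Q‖ + 1)), h2]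
    calc C * ‖f‖ ^ 2 ≤ C * (((‖P‖ + 1) * (‖Q‖ + 1) ^ 2) * ⟪P f, f⟫) :=
          mul_le_mul_of_nonneg_left hmain hCpos.le
      _ = ⟪P f, f⟫ := by
          rw [hCdef, ← mul_assoc, inv_mul_cancel₀ hKpos.ne', one_mul]
  · -- upper bound
    rw [hts]
    calc ⟪P f, f⟫ ≤ ‖P f‖ * ‖f‖ := real_inner_le_norm _ _
      _ ≤ (‖P‖ * ‖f‖) * ‖f‖ := mul_le_mul_of_nonneg_right (P.le_opNorm f) (norm_nonneg _)
      _ = ‖P‖ * ‖f‖ ^ 2 := by ring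
      _ ≤ (‖P‖ + 1) * ‖f‖ ^ 2 := by nlinarith [sq_nonneg ‖f‖]
      _ ≤ D * ‖f‖ ^ 2 :=
          mul_le_mul_of_nonneg_right (le_max_right _ _) (sq_nonneg _)
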